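/- arXiv:2511.18041 — 2 statements merged into one kernel-verified Lean document; each statement's English description precedes it below -/
import Mathlib

section
/- Let X be a finite dimensional complex Banach space and Y a complex Banach space. If f ∈ Hl₀(B_X, Y) (vector-valued little holomorphic Lipschitz map), then the transpose f^t : Y* → Hl₀(B_X), f^t(y*) = y* ∘ f, is a compact linear operator and maps the closed unit ball of Y* into a relatively compact subset of Hl₀(B_X). -/
open Metric Set Filter Topology

noncomputable section

universe u

def LipImage {X Y : Type*} [NormedAddCommGroup X] [NormedSpace ℂ X]
    [NormedAddCommGroup Y] [NormedSpace ℂ Y] (f : X → Y) : Set Y :=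
  {v | ∃ x ∈ ball (0 : X) 1, ∃ y ∈ ball (0 : X) 1, x ≠ y ∧ v = ‖x - y‖⁻¹ • (f x - f y)}

def MemHL {X Y : Type*} [NormedAddCommGroup X] [NormedSpace ℂ X]
    [NormedAddCommGroup Y] [NormedSpace ℂ Y] (f : X → Y) : Prop :=
  f 0 = 0 ∧ DifferentiableOn ℂ f (ball (0 : X) 1) ∧
    ∃ C : ℝ, ∀ x ∈ ball (0 : X) 1, ∀ y ∈ ball (0 : X) 1, ‖f x - f y‖ ≤ C * ‖x - y‖

def LipNorm {X Y : Type*} [NormedAddCommGroup X] [NormedSpace ℂ X]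
    [NormedAddCommGroup Y] [NormedSpace ℂ Y] (f : X → Y) : ℝ :=
  sSup ((fun p : X × X => ‖f p.1 - f p.2‖ / ‖p.1 - p.2‖) ''
    {p : X × X | p.1 ∈ ball (0 : X) 1 ∧ p.2 ∈ ball (0 : X) 1 ∧ p.1 ≠ p.2})

/-- Membership in the little holomorphic Lipschitz space Hl₀. -/
def MemHl {X Y : Type*} [NormedAddCommGroup X] [NormedSpace ℂ X]
    [NormedAddCommGroup Y] [NormedSpace ℂ Y] (f : X → Y) : Prop :=
  MemHL f ∧ ∀ ε > (0 : ℝ), ∃ δ > (0 : ℝ), ∀ x ∈ ball (0 : X) 1, ∀ y ∈ ball (0 : X) 1,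
    ‖x - y‖ < δ → ‖f x - f y‖ ≤ ε * ‖x - y‖

section Aux

variable {X Y : Type*} [NormedAddCommGroup X] [NormedSpace ℂ X]
  [NormedAddCommGroup Y] [NormedSpace ℂ Y]

lemma memHL_comp {f : X → Y} (hf : MemHL f) (θ : Y →L[ℂ] ℂ) :
    MemHL fun x => θ (f x) := by
  obtain ⟨h0, hdiff, C, hC⟩ := hf
  refine ⟨by simp [h0], θ.differentiable.comp_differentiableOn hdiff, ‖θ‖ * C, ?_⟩
  intro x hx y hy
  calc ‖θ (f x) - θ (f y)‖ = ‖θ (f x - f y)‖ := by rw [map_sub]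
    _ ≤ ‖θ‖ * ‖f x - f y‖ := θ.le_opNorm _
    _ ≤ ‖θ‖ * (C * ‖x - y‖) :=
        mul_le_mul_of_nonneg_left (hC x hx y hy) (norm_nonneg θ)
    _ = ‖θ‖ * C * ‖x - y‖ := (mul_assoc _ _ _).symm

lemma lipNorm_le {g : X → Y} {b : ℝ} (hb : 0 ≤ b)
    (h : ∀ x ∈ ball (0 : X) 1, ∀ y ∈ ball (0 : X) 1, x ≠ y → ‖g x - g y‖ ≤ b * ‖x - y‖) :
    LipNorm g ≤ b := by
  apply Real.sSup_le _ hb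
  rintro a ⟨p, ⟨hp1, hp2, hne⟩, rfl⟩
  have hxy : (0:ℝ) < ‖p.1 - p.2‖ := by
    rw [norm_pos_iff]
    exact sub_ne_zero_of_ne hne
  rw [div_le_iff₀ hxy]
  exact h _ hp1 _ hp2 hne

lemma totallyBounded_lipImage [FiniteDimensional ℂ X]
    {f : X → Y} (hf : MemHl f) : TotallyBounded (LipImage f) := by
  obtain ⟨⟨h0, hdiff, C₀, hC₀⟩, hlittle⟩ := hf
  set C : ℝ := max C₀ 0 with hCdef
  have hC : ∀ x ∈ ball (0:X) 1, ∀ y ∈ ball (0:X) 1, ‖f x - f y‖ ≤ C * ‖x - y‖ := fun x hx y hy =>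
    (hC₀ x hx y hy).trans (mul_le_mul_of_nonneg_right (le_max_left _ _) (norm_nonneg _))
  have hC0 : (0:ℝ) ≤ C := le_max_right _ _
  rw [Metric.totallyBounded_iff]
  intro ε hε
  obtain ⟨δ, hδ, hδε⟩ := hlittle (ε/2) (by positivity)
  set A : Set (X × X) := {p | p.1 ∈ ball (0:X) 1 ∧ p.2 ∈ ball (0:X) 1 ∧ δ ≤ ‖p.1 - p.2‖} with hA
  have hAtb : TotallyBounded A := by
    refine TotallyBounded.subset ?_
      (((isCompact_closedBall (0:X) 1).prod (isCompact_closedBall (0:X) 1)).totallyBounded)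
    rintro ⟨x, y⟩ ⟨hx, hy, -⟩
    exact ⟨ball_subset_closedBall hx, ball_subset_closedBall hy⟩
  set g : X × X → Y := fun p => ‖p.1 - p.2‖⁻¹ • (f p.1 - f p.2) with hg
  set L : ℝ := 4 * C / δ with hL
  have hL0 : (0:ℝ) ≤ L := by positivity
  set r : ℝ := ε / (L + 1) with hr
  have hrpos : 0 < r := by positivity
  obtain ⟨t, hts, htfin, htcov⟩ := finite_approx_of_totallyBounded hAtb r hrpos
  -- key Lipschitz estimate for g on A
  have key : ∀ p ∈ A, ∀ q ∈ A, ‖g p - g q‖ ≤ (2 * C / δ) * (‖p.1 - q.1‖ + ‖p.2 - q.2‖) := by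
    rintro ⟨x, y⟩ ⟨hx, hy, ha⟩ ⟨x', y'⟩ ⟨hx', hy', hb⟩
    have ha0 : (0:ℝ) < ‖x - y‖ := lt_of_lt_of_le hδ ha
    have hb0 : (0:ℝ) < ‖x' - y'‖ := lt_of_lt_of_le hδ hb
    have step1 : g (x, y) - g (x', y')
        = ‖x - y‖⁻¹ • ((f x - f y) - (f x' - f y'))
          + (‖x - y‖⁻¹ - ‖x' - y'‖⁻¹) • (f x' - f y') := by
      simp only [hg, smul_sub, sub_smul]
      abel
    have habs : |‖x' - y'‖ - ‖x - y‖| ≤ ‖x - x'‖ + ‖y - y'‖ := by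
      calc |‖x' - y'‖ - ‖x - y‖| ≤ ‖(x' - y') - (x - y)‖ := abs_norm_sub_norm_le _ _
        _ = ‖(x' - x) - (y' - y)‖ := congrArg norm (by abel)
        _ ≤ ‖x' - x‖ + ‖y' - y‖ := norm_sub_le _ _
        _ = ‖x - x'‖ + ‖y - y'‖ := by rw [norm_sub_rev, norm_sub_rev y']
    have t1 : ‖‖x - y‖⁻¹ • ((f x - f y) - (f x' - f y'))‖
        ≤ δ⁻¹ * (C * ‖x - x'‖ + C * ‖y - y'‖) := by
      rw [norm_smul, Real.norm_eq_abs, abs_of_nonneg (inv_nonneg.2 ha0.le)]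
      have hsub : ‖(f x - f y) - (f x' - f y')‖ ≤ C * ‖x - x'‖ + C * ‖y - y'‖ := by
        calc ‖(f x - f y) - (f x' - f y')‖ = ‖(f x - f x') - (f y - f y')‖ :=
              congrArg norm (by abel)
          _ ≤ ‖f x - f x'‖ + ‖f y - f y'‖ := norm_sub_le _ _
          _ ≤ C * ‖x - x'‖ + C * ‖y - y'‖ := add_le_add (hC x hx x' hx') (hC y hy y' hy')
      exact mul_le_mul (inv_anti₀ hδ ha) hsub (norm_nonneg _) (inv_nonneg.2 hδ.le)
    have t2 : ‖(‖x - y‖⁻¹ - ‖x' - y'‖⁻¹) • (f x' - f y')‖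
        ≤ C / δ * (‖x - x'‖ + ‖y - y'‖) := by
      rw [norm_smul, Real.norm_eq_abs]
      have einv : ‖x - y‖⁻¹ - ‖x' - y'‖⁻¹
          = (‖x' - y'‖ - ‖x - y‖) * (‖x - y‖⁻¹ * ‖x' - y'‖⁻¹) := by
        field_simp
      rw [einv, abs_mul, abs_of_nonneg (by positivity : (0:ℝ) ≤ ‖x - y‖⁻¹ * ‖x' - y'‖⁻¹)]
      have hw : ‖f x' - f y'‖ ≤ C * ‖x' - y'‖ := hC x' hx' y' hy'
      calc |‖x' - y'‖ - ‖x - y‖| * (‖x - y‖⁻¹ * ‖x' - y'‖⁻¹) * ‖f x' - f y'‖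
          ≤ (‖x - x'‖ + ‖y - y'‖) * (‖x - y‖⁻¹ * ‖x' - y'‖⁻¹) * (C * ‖x' - y'‖) := by
            apply mul_le_mul (mul_le_mul_of_nonneg_right habs (by positivity)) hw
              (norm_nonneg _) (by positivity)
        _ = (‖x - x'‖ + ‖y - y'‖) * C * ‖x - y‖⁻¹ * (‖x' - y'‖⁻¹ * ‖x' - y'‖) := by ring
        _ = C * ‖x - y‖⁻¹ * (‖x - x'‖ + ‖y - y'‖) := by
            rw [inv_mul_cancel₀ hb0.ne']; ring
        _ ≤ C * δ⁻¹ * (‖x - x'‖ + ‖y - y'‖) := by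
            apply mul_le_mul_of_nonneg_right _ (by positivity)
            exact mul_le_mul_of_nonneg_left (inv_anti₀ hδ ha) hC0
        _ = C / δ * (‖x - x'‖ + ‖y - y'‖) := by rw [div_eq_mul_inv]
    calc ‖g (x, y) - g (x', y')‖
        ≤ ‖‖x - y‖⁻¹ • ((f x - f y) - (f x' - f y'))‖
          + ‖(‖x - y‖⁻¹ - ‖x' - y'‖⁻¹) • (f x' - f y')‖ := by rw [step1]; exact norm_add_le _ _
      _ ≤ δ⁻¹ * (C * ‖x - x'‖ + C * ‖y - y'‖) + C / δ * (‖x - x'‖ + ‖y - y'‖) :=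
          add_le_add t1 t2
      _ = (2 * C / δ) * (‖x - x'‖ + ‖y - y'‖) := by field_simp; ring
  refine ⟨insert 0 (g '' t), (htfin.image g).insert 0, ?_⟩
  rintro v ⟨x, hx, y, hy, hne, rfl⟩
  have hxy : (0:ℝ) < ‖x - y‖ := by rw [norm_pos_iff]; exact sub_ne_zero_of_ne hne
  by_cases hcase : ‖x - y‖ < δ
  · refine mem_biUnion (mem_insert 0 _) ?_
    rw [mem_ball, dist_zero_right, norm_smul, Real.norm_eq_abs,
      abs_of_nonneg (inv_nonneg.2 hxy.le)]
    calc ‖x - y‖⁻¹ * ‖f x - f y‖ ≤ ‖x - y‖⁻¹ * (ε / 2 * ‖x - y‖) :=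
          mul_le_mul_of_nonneg_left (hδε x hx y hy hcase) (inv_nonneg.2 hxy.le)
      _ = ε / 2 := by field_simp
      _ < ε := by linarith
  · have hpA : (x, y) ∈ A := ⟨hx, hy, not_lt.1 hcase⟩
    obtain ⟨q, hqt, hq⟩ := mem_iUnion₂.1 (htcov hpA)
    refine mem_biUnion (mem_insert_of_mem _ (mem_image_of_mem g hqt)) ?_
    rw [mem_ball] at hq ⊢
    have hdq : ‖(x, y) - q‖ < r := by rwa [← dist_eq_norm]
    have hest : ‖g (x, y) - g q‖ ≤ L * dist (x, y) q := by
      have := key (x, y) hpA q (hts hqt)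
      refine this.trans ?_
      have h1 : ‖(x, y).1 - q.1‖ ≤ dist (x, y) q := by
        rw [← dist_eq_norm]; exact (le_max_left _ _).trans_eq (Prod.dist_eq).symm
      have h2 : ‖(x, y).2 - q.2‖ ≤ dist (x, y) q := by
        rw [← dist_eq_norm]; exact (le_max_right _ _).trans_eq (Prod.dist_eq).symm
      have hd0 : (0:ℝ) ≤ dist (x, y) q := dist_nonneg
      have h2Cδ : (0:ℝ) ≤ 2 * C / δ := by positivity
      calc (2 * C / δ) * (‖(x, y).1 - q.1‖ + ‖(x, y).2 - q.2‖)
          ≤ (2 * C / δ) * (2 * dist (x, y) q) := by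
            apply mul_le_mul_of_nonneg_left _ h2Cδ
            linarith
        _ = L * dist (x, y) q := by rw [hL]; ring
    have hdist : dist (g (x, y)) (g q) < ε := by
      rw [dist_eq_norm]
      have hdlt : dist (x, y) q < r := hq
      calc ‖g (x, y) - g q‖ ≤ L * dist (x, y) q := hest
        _ ≤ L * r := mul_le_mul_of_nonneg_left hdlt.le hL0
        _ < (L + 1) * r := by nlinarith
        _ = ε := by rw [hr]; field_simp
    exact hdist

end Aux

/-- for X finite dimensional and f ∈ Hl₀(B_X, Y), the transpose
f^t : Y* → Hl₀(B_X), y* ↦ y* ∘ f, takes values in Hl₀(B_X), is a compact linear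
operator, and maps the closed unit ball of Y* onto a relatively compact set.
Hl₀(B_X) ⊆ HL₀(B_X) is identified inside G₀(B_X)* via the canonical isometric
isomorphism Λ_X, hypothesized through linC. -/
theorem littleHL_transpose_compact {X Y G : Type*}
    [NormedAddCommGroup X] [NormedSpace ℂ X] [FiniteDimensional ℂ X]
    [NormedAddCommGroup Y] [NormedSpace ℂ Y] [CompleteSpace Y]
    [NormedAddCommGroup G] [NormedSpace ℂ G] [CompleteSpace G]
    (δX : X → G) (hδ : MemHL δX)
    (hdense : Dense (Submodule.span ℂ (δX '' ball (0 : X) 1) : Set G))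
    (linC : (X → ℂ) → (G →L[ℂ] ℂ))
    (hlinC : ∀ g : X → ℂ, MemHL g → ∀ x ∈ ball (0 : X) 1, linC g (δX x) = g x)
    (hlinCnorm : ∀ g : X → ℂ, MemHL g → ‖linC g‖ = LipNorm g)
    (f : X → Y) (hf : MemHl f) :
    (∀ φ : Y →L[ℂ] ℂ, MemHl (fun x => φ (f x))) ∧
    IsCompactOperator (fun φ : Y →L[ℂ] ℂ => linC (fun x => φ (f x))) ∧
    IsCompact (closure ((fun φ : Y →L[ℂ] ℂ => linC (fun x => φ (f x))) ''
      closedBall (0 : Y →L[ℂ] ℂ) 1)) := by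
  have hHLf : MemHL f := hf.1
  have hcomp : ∀ θ : Y →L[ℂ] ℂ, MemHL fun x => θ (f x) := fun θ => memHL_comp hHLf θ
  -- Part 1
  have part1 : ∀ φ : Y →L[ℂ] ℂ, MemHl (fun x => φ (f x)) := by
    intro φ
    refine ⟨hcomp φ, ?_⟩
    intro ε hε
    have hφ1 : (0:ℝ) < ‖φ‖ + 1 := by positivity
    obtain ⟨δ, hδ, hδε⟩ := hf.2 (ε / (‖φ‖ + 1)) (by positivity)
    refine ⟨δ, hδ, ?_⟩
    intro x hx y hy hxy
    calc ‖φ (f x) - φ (f y)‖ = ‖φ (f x - f y)‖ := by rw [map_sub]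
      _ ≤ ‖φ‖ * ‖f x - f y‖ := φ.le_opNorm _
      _ ≤ ‖φ‖ * (ε / (‖φ‖ + 1) * ‖x - y‖) :=
          mul_le_mul_of_nonneg_left (hδε x hx y hy hxy) (norm_nonneg φ)
      _ = ‖φ‖ * (ε / (‖φ‖ + 1)) * ‖x - y‖ := (mul_assoc _ _ _).symm
      _ ≤ ε * ‖x - y‖ := by
          apply mul_le_mul_of_nonneg_right _ (norm_nonneg _)
          rw [mul_div_assoc']
          rw [div_le_iff₀ hφ1]
          nlinarith [norm_nonneg φ]
  -- linearity of linC on differences of composites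
  have hlinsub : ∀ φ ψ : Y →L[ℂ] ℂ,
      linC (fun x => φ (f x)) - linC (fun x => ψ (f x)) = linC (fun x => (φ - ψ) (f x)) := by
    intro φ ψ
    refine ContinuousLinearMap.ext_on hdense ?_
    rintro g ⟨x, hx, rfl⟩
    have h3 := hlinC _ (hcomp (φ - ψ)) x hx
    simp only [ContinuousLinearMap.sub_apply] at h3 ⊢
    rw [hlinC _ (hcomp φ) x hx, hlinC _ (hcomp ψ) x hx, h3]
  -- totally bounded image
  have htb : TotallyBounded ((fun φ : Y →L[ℂ] ℂ => linC (fun x => φ (f x))) ''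
      closedBall (0 : Y →L[ℂ] ℂ) 1) := by
    rw [Metric.totallyBounded_iff]
    intro ε hε
    obtain ⟨t, htfin, htcov⟩ :=
      Metric.totallyBounded_iff.1 (totallyBounded_lipImage hf) (ε/8) (by positivity)
    haveI : Fintype ↥t := htfin.fintype
    set Φ : (Y →L[ℂ] ℂ) → (↥t → ℂ) := fun φ v => φ (v : Y) with hΦ
    obtain ⟨M₀, hM⟩ := (htfin.image norm).bddAbove
    set M : ℝ := max M₀ 0 with hMdef
    have hM0 : (0:ℝ) ≤ M + 1 := by positivity
    have hΦsub : Φ '' closedBall 0 1 ⊆ closedBall 0 (M + 1) := by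
      rintro _ ⟨φ, hφ, rfl⟩
      rw [mem_closedBall, dist_zero_right]
      rw [pi_norm_le_iff_of_nonneg hM0]
      intro v
      have hφn : ‖φ‖ ≤ 1 := by rwa [mem_closedBall, dist_zero_right] at hφ
      calc ‖Φ φ v‖ ≤ ‖φ‖ * ‖(v : Y)‖ := φ.le_opNorm _
        _ ≤ 1 * (M + 1) := by
            apply mul_le_mul hφn _ (norm_nonneg _) zero_le_one
            have h1 := hM (mem_image_of_mem norm v.2)
            have h2 : M₀ ≤ M := le_max_left _ _
            linarith
        _ = M + 1 := one_mul _
    have hΦtb : TotallyBounded (Φ '' closedBall 0 1) :=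
      TotallyBounded.subset hΦsub (isCompact_closedBall _ _).totallyBounded
    obtain ⟨u, hut, hufin, hucov⟩ := finite_approx_of_totallyBounded hΦtb (ε/4) (by positivity)
    haveI : Finite ↥u := hufin.to_subtype
    choose ψof hψball hψeq using fun b : ↥u => hut b.2
    refine ⟨(fun b : ↥u => linC (fun x => (ψof b) (f x))) '' univ,
      (finite_univ.image _), ?_⟩
    rintro _ ⟨φ, hφ, rfl⟩
    have hΦφ : Φ φ ∈ Φ '' closedBall 0 1 := mem_image_of_mem Φ hφ
    obtain ⟨b, hbu, hb⟩ := mem_iUnion₂.1 (hucov hΦφ)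
    refine mem_biUnion (mem_image_of_mem _ (mem_univ (⟨b, hbu⟩ : ↥u))) ?_
    set ψ := ψof ⟨b, hbu⟩ with hψ
    have hψeq' : Φ ψ = b := hψeq ⟨b, hbu⟩
    have hψn : ‖ψ‖ ≤ 1 := by
      have := hψball ⟨b, hbu⟩
      rwa [mem_closedBall, dist_zero_right] at this
    have hφn : ‖φ‖ ≤ 1 := by rwa [mem_closedBall, dist_zero_right] at hφ
    rw [mem_ball, dist_eq_norm, hlinsub φ ψ,
      hlinCnorm _ (hcomp (φ - ψ))]
    have hbound : LipNorm (fun x => (φ - ψ) (f x)) ≤ ε / 2 := by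
      apply lipNorm_le (by positivity)
      intro x hx y hy hne
      have hxy : (0:ℝ) < ‖x - y‖ := by rw [norm_pos_iff]; exact sub_ne_zero_of_ne hne
      set v : Y := ‖x - y‖⁻¹ • (f x - f y) with hv
      have hvim : v ∈ LipImage f := ⟨x, hx, y, hy, hne, rfl⟩
      obtain ⟨w, hwt, hw⟩ := mem_iUnion₂.1 (htcov hvim)
      rw [mem_ball, dist_eq_norm] at hw
      have hθw : ‖(φ - ψ) (w : Y)‖ < ε / 4 := by
        have hd : dist (Φ φ) b < ε / 4 := by rwa [mem_ball] at hb
        have := dist_le_pi_dist (Φ φ) b (⟨w, hwt⟩ : ↥t)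
        rw [← hψeq'] at hd this
        have hcoord : dist (Φ φ ⟨w, hwt⟩) (Φ ψ ⟨w, hwt⟩) < ε / 4 := lt_of_le_of_lt this hd
        rw [dist_eq_norm] at hcoord
        simpa [hΦ, ContinuousLinearMap.sub_apply] using hcoord
      have hθv : ‖(φ - ψ) v‖ ≤ ε / 2 := by
        have hsplit : (φ - ψ) v = (φ - ψ) (w : Y) + (φ - ψ) (v - w) := by
          rw [← map_add]; congr 1; abel
        have hθvw : ‖(φ - ψ) (v - w)‖ ≤ 2 * (ε/8) := by
          calc ‖(φ - ψ) (v - w)‖ ≤ ‖φ - ψ‖ * ‖v - w‖ := (φ - ψ).le_opNorm _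
            _ ≤ 2 * (ε/8) := by
                apply mul_le_mul _ hw.le (norm_nonneg _) (by norm_num)
                calc ‖φ - ψ‖ ≤ ‖φ‖ + ‖ψ‖ := norm_sub_le _ _
                  _ ≤ 2 := by linarith
        rw [hsplit]
        calc ‖(φ - ψ) (w : Y) + (φ - ψ) (v - w)‖
            ≤ ‖(φ - ψ) (w : Y)‖ + ‖(φ - ψ) (v - w)‖ := norm_add_le _ _
          _ ≤ ε / 4 + 2 * (ε/8) := add_le_add hθw.le hθvw
          _ = ε / 2 := by ring
      have heval : ‖(φ - ψ) (f x) - (φ - ψ) (f y)‖ = ‖x - y‖ * ‖(φ - ψ) v‖ := by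
        rw [← map_sub, hv, (φ - ψ).map_smul_of_tower, norm_smul, Real.norm_eq_abs,
          abs_of_nonneg (inv_nonneg.2 hxy.le), ← mul_assoc, mul_inv_cancel₀ hxy.ne', one_mul]
      rw [heval]
      calc ‖x - y‖ * ‖(φ - ψ) v‖ ≤ ‖x - y‖ * (ε / 2) :=
            mul_le_mul_of_nonneg_left hθv hxy.le
        _ = ε / 2 * ‖x - y‖ := mul_comm _ _
    linarith
  have hclos : IsCompact (closure ((fun φ : Y →L[ℂ] ℂ => linC (fun x => φ (f x))) ''
      closedBall (0 : Y →L[ℂ] ℂ) 1)) :=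
    TotallyBounded.isCompact_of_isClosed htb.closure isClosed_closure
  refine ⟨part1, ?_, hclos⟩
  refine ⟨_, hclos, ?_⟩
  filter_upwards [closedBall_mem_nhds (0 : Y →L[ℂ] ℂ) one_pos] with φ hφ
  exact subset_closure (mem_image_of_mem _ hφ)
end
end

section
/- Let A be an s-normed operator ideal. Define the holomorphic-Lipschitz dual ideal components A^{HL₀-dual}(B_X,Y) = {f ∈ HL₀(B_X,Y) : f^t ∈ A(Y*, HL₀(B_X))} with norm ‖f‖ = ‖f^t‖_A. Then A^{HL₀-dual}(B_X,Y) coincides isometrically with the composition ideal A^{dual} ∘ HL₀(B_X,Y), i.e., f^t ∈ A(Y*, HL₀(B_X)) if and only if f = T ∘ h for some Banach space Z, T ∈ L(Z,Y) with T* ∈ A(Y*, Z*), and h ∈ HL₀(B_X, Z); and ‖f^t‖_A = inf ‖T*‖_A L(h) over all such factorizations. -/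
open Metric Set Filter Topology

noncomputable section

universe u

/-- A bundled complex Banach space. -/
structure BanachSp : Type (u + 1) where
  carrier : Type u
  [nacg : NormedAddCommGroup carrier]
  [nsc : NormedSpace ℂ carrier]
  [cs : CompleteSpace carrier]

attribute [instance] BanachSp.nacg BanachSp.nsc BanachSp.cs

/-- Relative 𝒜-compactness (Carl–Stephani): K ⊆ T(M) for some Banach space W,
T ∈ 𝒜(W, Z) and relatively compact M ⊆ W. -/
def RelACompact (A : ∀ W Z : BanachSp.{u}, Set (W.carrier →L[ℂ] Z.carrier))
    (Z : BanachSp.{u}) (K : Set Z.carrier) : Prop :=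
  ∃ (W : BanachSp.{u}) (T : W.carrier →L[ℂ] Z.carrier) (M : Set W.carrier),
    T ∈ A W Z ∧ IsCompact (closure M) ∧ K ⊆ T '' M

/-- The measure m_𝒜 of 𝒜-compactness of a set. -/
def mA (A : ∀ W Z : BanachSp.{u}, Set (W.carrier →L[ℂ] Z.carrier))
    (nA : ∀ W Z : BanachSp.{u}, (W.carrier →L[ℂ] Z.carrier) → ℝ)
    (Z : BanachSp.{u}) (K : Set Z.carrier) : ℝ :=
  sInf {r : ℝ | ∃ (W : BanachSp.{u}) (T : W.carrier →L[ℂ] Z.carrier) (M : Set W.carrier),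
    T ∈ A W Z ∧ IsCompact (closure M) ∧ K ⊆ T '' M ∧ r = nA W Z T}

/-- The dual of a bundled complex Banach space. -/
def dualSp (W : BanachSp.{u}) : BanachSp.{u} := ⟨W.carrier →L[ℂ] ℂ⟩

section AuxHL

variable {X : Type*} [NormedAddCommGroup X] [NormedSpace ℂ X]

lemma lipNorm_nonneg' {Y : Type*} [NormedAddCommGroup Y] [NormedSpace ℂ Y]
    (f : X → Y) : 0 ≤ LipNorm f := by
  apply Real.sSup_nonneg
  rintro r ⟨p, -, rfl⟩
  positivity

lemma lipNorm_le' {Y : Type*} [NormedAddCommGroup Y] [NormedSpace ℂ Y]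
    {f : X → Y} {C : ℝ} (hC : 0 ≤ C)
    (h : ∀ x ∈ ball (0 : X) 1, ∀ y ∈ ball (0 : X) 1, ‖f x - f y‖ ≤ C * ‖x - y‖) :
    LipNorm f ≤ C := by
  apply Real.sSup_le _ hC
  rintro r ⟨⟨x, y⟩, ⟨hx, hy, hxy⟩, rfl⟩
  have hpos : (0 : ℝ) < ‖x - y‖ := by
    rw [norm_pos_iff, sub_ne_zero]; exact hxy
  rw [div_le_iff₀ hpos]
  exact h x hx y hy

lemma le_lipNorm' {Y : Type*} [NormedAddCommGroup Y] [NormedSpace ℂ Y]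
    {f : X → Y} (hf : MemHL f) {x y : X}
    (hx : x ∈ ball (0 : X) 1) (hy : y ∈ ball (0 : X) 1) :
    ‖f x - f y‖ ≤ LipNorm f * ‖x - y‖ := by
  rcases eq_or_ne x y with rfl | hxy
  · simp
  obtain ⟨C, hC⟩ := hf.2.2
  have hbdd : BddAbove ((fun p : X × X => ‖f p.1 - f p.2‖ / ‖p.1 - p.2‖) ''
      {p : X × X | p.1 ∈ ball (0 : X) 1 ∧ p.2 ∈ ball (0 : X) 1 ∧ p.1 ≠ p.2}) := by
    refine ⟨max C 0, ?_⟩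
    rintro r ⟨⟨a, b⟩, ⟨ha, hb, hab⟩, rfl⟩
    have hpos : (0 : ℝ) < ‖a - b‖ := by
      rw [norm_pos_iff, sub_ne_zero]; exact hab
    refine le_trans ?_ (le_max_left C 0)
    rw [div_le_iff₀ hpos]
    exact hC a ha b hb
  have hpos : (0 : ℝ) < ‖x - y‖ := by
    rw [norm_pos_iff, sub_ne_zero]; exact hxy
  have hmem : ‖f x - f y‖ / ‖x - y‖ ∈ ((fun p : X × X => ‖f p.1 - f p.2‖ / ‖p.1 - p.2‖) ''
      {p : X × X | p.1 ∈ ball (0 : X) 1 ∧ p.2 ∈ ball (0 : X) 1 ∧ p.1 ≠ p.2}) :=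
    ⟨(x, y), ⟨hx, hy, hxy⟩, rfl⟩
  have := le_csSup hbdd hmem
  rw [div_le_iff₀ hpos] at this
  exact this

lemma memHL_clm_comp' {Y Z : Type*} [NormedAddCommGroup Y] [NormedSpace ℂ Y]
    [NormedAddCommGroup Z] [NormedSpace ℂ Z]
    (ψ : Y →L[ℂ] Z) {h : X → Y} (hh : MemHL h) : MemHL (fun x => ψ (h x)) := by
  obtain ⟨C, hC⟩ := hh.2.2
  refine ⟨by simp [hh.1], ψ.differentiable.comp_differentiableOn hh.2.1, ⟨‖ψ‖ * C, ?_⟩⟩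
  intro x hx y hy
  calc ‖ψ (h x) - ψ (h y)‖ = ‖ψ (h x - h y)‖ := by rw [map_sub]
    _ ≤ ‖ψ‖ * ‖h x - h y‖ := ψ.le_opNorm _
    _ ≤ ‖ψ‖ * (C * ‖x - y‖) :=
        mul_le_mul_of_nonneg_left (hC x hx y hy) (norm_nonneg ψ)
    _ = ‖ψ‖ * C * ‖x - y‖ := by ring

lemma lipNorm_clm_comp_le' {Y Z : Type*} [NormedAddCommGroup Y] [NormedSpace ℂ Y]
    [NormedAddCommGroup Z] [NormedSpace ℂ Z]
    (ψ : Y →L[ℂ] Z) {h : X → Y} (hh : MemHL h) :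
    LipNorm (fun x => ψ (h x)) ≤ ‖ψ‖ * LipNorm h := by
  refine lipNorm_le' (mul_nonneg (norm_nonneg ψ) (lipNorm_nonneg' h)) ?_
  intro x hx y hy
  calc ‖ψ (h x) - ψ (h y)‖ = ‖ψ (h x - h y)‖ := by rw [map_sub]
    _ ≤ ‖ψ‖ * ‖h x - h y‖ := ψ.le_opNorm _
    _ ≤ ‖ψ‖ * (LipNorm h * ‖x - y‖) :=
        mul_le_mul_of_nonneg_left (le_lipNorm' hh hx hy) (norm_nonneg ψ)
    _ = ‖ψ‖ * LipNorm h * ‖x - y‖ := by ring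

end AuxHL

set_option maxHeartbeats 1000000 in
/-- the holomorphic-Lipschitz dual ideal coincides isometrically with
the composition ideal 𝒜^{dual} ∘ HL₀.  Identifying HL₀(B_X) ≅ G₀(B_X)* via the
canonical isometric isomorphism Λ_X (hypothesized through linC), the transpose
f^t : Y* → HL₀(B_X) corresponds to the operator u : Y* → G₀(B_X)*,
u(y*) = T_{y* ∘ f}.  Then u ∈ 𝒜(Y*, G₀(B_X)*) iff f = T ∘ h for some Banach space
Z, T ∈ L(Z, Y) whose adjoint T* lies in 𝒜(Y*, Z*), and h ∈ HL₀(B_X, Z); and in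
that case ‖f^t‖_𝒜 = inf ‖T*‖_𝒜 · L(h) over all such factorizations. -/
theorem dual_ideal_eq_composition_ideal {X : Type u}
    [NormedAddCommGroup X] [NormedSpace ℂ X] [CompleteSpace X]
    (A : ∀ W Z : BanachSp.{u}, Set (W.carrier →L[ℂ] Z.carrier))
    (hA_comp : ∀ (U W Z V : BanachSp.{u}) (S : Z.carrier →L[ℂ] V.carrier)
      (T : W.carrier →L[ℂ] Z.carrier) (R : U.carrier →L[ℂ] W.carrier),
      T ∈ A W Z → S.comp (T.comp R) ∈ A U V)
    (hA_rank1 : ∀ (W Z : BanachSp.{u}) (φ : W.carrier →L[ℂ] ℂ) (z : Z.carrier),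
      φ.smulRight z ∈ A W Z)
    (s : ℝ) (hs0 : 0 < s) (hs1 : s ≤ 1)
    (nA : ∀ W Z : BanachSp.{u}, (W.carrier →L[ℂ] Z.carrier) → ℝ)
    (hnA_nonneg : ∀ (W Z : BanachSp.{u}) (T : W.carrier →L[ℂ] Z.carrier), 0 ≤ nA W Z T)
    (hnA_op : ∀ (W Z : BanachSp.{u}) (T : W.carrier →L[ℂ] Z.carrier), ‖T‖ ≤ nA W Z T)
    (hnA_tri : ∀ (W Z : BanachSp.{u}) (T T' : W.carrier →L[ℂ] Z.carrier),
      nA W Z (T + T') ^ s ≤ nA W Z T ^ s + nA W Z T' ^ s)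
    (hnA_comp : ∀ (U W Z V : BanachSp.{u}) (S : Z.carrier →L[ℂ] V.carrier)
      (T : W.carrier →L[ℂ] Z.carrier) (R : U.carrier →L[ℂ] W.carrier),
      T ∈ A W Z → nA U V (S.comp (T.comp R)) ≤ ‖S‖ * nA W Z T * ‖R‖)
    (G Y : BanachSp.{u})
    (δX : X → G.carrier) (hδ : MemHL δX)
    (hdense : Dense (Submodule.span ℂ (δX '' ball (0 : X) 1) : Set G.carrier))
    (linC : (X → ℂ) → (G.carrier →L[ℂ] ℂ))
    (hlinC : ∀ g : X → ℂ, MemHL g → ∀ x ∈ ball (0 : X) 1, linC g (δX x) = g x)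
    (hlinCnorm : ∀ g : X → ℂ, MemHL g → ‖linC g‖ = LipNorm g)
    (f : X → Y.carrier) (hf : MemHL f)
    (u : (Y.carrier →L[ℂ] ℂ) →L[ℂ] (G.carrier →L[ℂ] ℂ))
    (hu : ∀ φ : Y.carrier →L[ℂ] ℂ, u φ = linC (fun x => φ (f x))) :
    (u ∈ A (dualSp Y) (dualSp G) ↔
      ∃ (Z : BanachSp.{u}) (T : Z.carrier →L[ℂ] Y.carrier)
        (T' : (Y.carrier →L[ℂ] ℂ) →L[ℂ] (Z.carrier →L[ℂ] ℂ)),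
        (∀ (φ : Y.carrier →L[ℂ] ℂ) (z : Z.carrier), T' φ z = φ (T z)) ∧
        T' ∈ A (dualSp Y) (dualSp Z) ∧
        ∃ h : X → Z.carrier, MemHL h ∧ ∀ x ∈ ball (0 : X) 1, f x = T (h x)) ∧
    (u ∈ A (dualSp Y) (dualSp G) →
      nA (dualSp Y) (dualSp G) u =
        sInf {r : ℝ | ∃ (Z : BanachSp.{u}) (T : Z.carrier →L[ℂ] Y.carrier)
          (T' : (Y.carrier →L[ℂ] ℂ) →L[ℂ] (Z.carrier →L[ℂ] ℂ)) (h : X → Z.carrier),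
          (∀ (φ : Y.carrier →L[ℂ] ℂ) (z : Z.carrier), T' φ z = φ (T z)) ∧
          T' ∈ A (dualSp Y) (dualSp Z) ∧ MemHL h ∧
          (∀ x ∈ ball (0 : X) 1, f x = T (h x)) ∧
          r = nA (dualSp Y) (dualSp Z) T' * LipNorm h}) := by
  classical
  -- Extensionality of functionals on G from density of the span of δX '' ball
  have hext : ∀ g₁ g₂ : G.carrier →L[ℂ] ℂ,
      (∀ x ∈ ball (0 : X) 1, g₁ (δX x) = g₂ (δX x)) → g₁ = g₂ := by
    intro g₁ g₂ hgg
    have h1 : Set.EqOn g₁ g₂ (δX '' ball (0 : X) 1) := by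
      rintro _ ⟨x, hx, rfl⟩; exact hgg x hx
    have h2 : Set.EqOn (⇑g₁) (⇑g₂)
        (Submodule.span ℂ (δX '' ball (0 : X) 1) : Set G.carrier) :=
      LinearMap.eqOn_span' h1
    have h3 := Continuous.ext_on hdense g₁.continuous g₂.continuous h2
    exact ContinuousLinearMap.ext fun z => congrFun h3 z
  -- Construction of the linearization T : G → Y of f
  set J : Y.carrier →ₗᵢ[ℂ] StrongDual ℂ (StrongDual ℂ Y.carrier) :=
    NormedSpace.inclusionInDoubleDualLi ℂ with hJdef
  have hJx : ∀ (y : Y.carrier) (φ : Y.carrier →L[ℂ] ℂ), J y φ = φ y := fun y φ => rfl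
  have hmem : ∀ g : G.carrier, ∃ y : Y.carrier,
      ∀ φ : Y.carrier →L[ℂ] ℂ, φ y = u φ g := by
    have hclosedrange : IsClosed (Set.range J) :=
      J.isometry.isUniformInducing.isComplete_range.isClosed
    let S : Submodule ℂ G.carrier :=
      (LinearMap.range J.toLinearMap).comap u.flip.toLinearMap
    have hSclosed : IsClosed (S : Set G.carrier) := by
      have : (S : Set G.carrier) = u.flip ⁻¹' (Set.range J) := rfl
      rw [this]
      exact hclosedrange.preimage u.flip.continuous
    have hsub : δX '' ball (0 : X) 1 ⊆ (S : Set G.carrier) := by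
      rintro _ ⟨x, hx, rfl⟩
      refine ⟨f x, ?_⟩
      ext φ
      have hφf : MemHL (fun z => φ (f z)) := memHL_clm_comp' φ hf
      show φ (f x) = u φ (δX x)
      rw [hu φ, hlinC _ hφf x hx]
    intro g
    have hgS : g ∈ S := by
      have hspan : (Submodule.span ℂ (δX '' ball (0 : X) 1) : Set G.carrier)
          ⊆ (S : Set G.carrier) :=
        Submodule.span_le.mpr hsub
      have hg : g ∈ closure (Submodule.span ℂ (δX '' ball (0 : X) 1) : Set G.carrier) :=
        hdense g
      have := closure_mono hspan hg
      rwa [hSclosed.closure_eq] at this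
    obtain ⟨y, hy⟩ := hgS
    refine ⟨y, fun φ => ?_⟩
    have := congrArg (fun w : (Y.carrier →L[ℂ] ℂ) →L[ℂ] ℂ => w φ) hy
    simpa [hJx] using this
  let Tfun : G.carrier → Y.carrier := fun g => Classical.choose (hmem g)
  have hT : ∀ (g : G.carrier) (φ : Y.carrier →L[ℂ] ℂ), φ (Tfun g) = u φ g :=
    fun g => Classical.choose_spec (hmem g)
  let Tlin : G.carrier →ₗ[ℂ] Y.carrier :=
    { toFun := Tfun
      map_add' := by
        intro g g'
        rw [NormedSpace.eq_iff_forall_dual_eq ℂ]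
        intro φ
        simp [hT, map_add]
      map_smul' := by
        intro a g
        rw [NormedSpace.eq_iff_forall_dual_eq ℂ]
        intro φ
        simp [hT, map_smul] }
  have hTbound : ∀ g : G.carrier, ‖Tlin g‖ ≤ ‖u‖ * ‖g‖ := by
    intro g
    refine NormedSpace.norm_le_dual_bound ℂ _ (by positivity) fun φ => ?_
    have : (Tlin g : Y.carrier) = Tfun g := rfl
    rw [this, hT g φ]
    calc ‖u φ g‖ ≤ ‖u φ‖ * ‖g‖ := (u φ).le_opNorm g
      _ ≤ ‖u‖ * ‖φ‖ * ‖g‖ := by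
          exact mul_le_mul_of_nonneg_right (u.le_opNorm φ) (norm_nonneg g)
      _ = ‖u‖ * ‖g‖ * ‖φ‖ := by ring
  let T : G.carrier →L[ℂ] Y.carrier := Tlin.mkContinuous ‖u‖ hTbound
  have hTapp : ∀ (g : G.carrier) (φ : Y.carrier →L[ℂ] ℂ), φ (T g) = u φ g := hT
  have hTδ : ∀ x ∈ ball (0 : X) 1, f x = T (δX x) := by
    intro x hx
    rw [NormedSpace.eq_iff_forall_dual_eq ℂ]
    intro φ
    rw [hTapp (δX x) φ, hu φ, hlinC _ (memHL_clm_comp' φ hf) x hx]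
  -- The factorization functional: from any factorization, u = v ∘ T₁'
  have hfact : ∀ (Z : BanachSp.{u}) (T₁ : Z.carrier →L[ℂ] Y.carrier)
      (T₁' : (Y.carrier →L[ℂ] ℂ) →L[ℂ] (Z.carrier →L[ℂ] ℂ)) (h₁ : X → Z.carrier),
      (∀ (φ : Y.carrier →L[ℂ] ℂ) (z : Z.carrier), T₁' φ z = φ (T₁ z)) → MemHL h₁ →
      (∀ x ∈ ball (0 : X) 1, f x = T₁ (h₁ x)) →
      ∃ v : (Z.carrier →L[ℂ] ℂ) →L[ℂ] (G.carrier →L[ℂ] ℂ),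
        ‖v‖ ≤ LipNorm h₁ ∧
        u = v.comp (T₁'.comp (ContinuousLinearMap.id ℂ (Y.carrier →L[ℂ] ℂ))) := by
    intro Z T₁ T₁' h₁ hT₁eq hh₁ hfh₁
    have hvb : ∀ ψ : Z.carrier →L[ℂ] ℂ,
        ‖linC (fun x => ψ (h₁ x))‖ ≤ LipNorm h₁ * ‖ψ‖ := by
      intro ψ
      rw [hlinCnorm _ (memHL_clm_comp' ψ hh₁)]
      calc LipNorm (fun x => ψ (h₁ x)) ≤ ‖ψ‖ * LipNorm h₁ := lipNorm_clm_comp_le' ψ hh₁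
        _ = LipNorm h₁ * ‖ψ‖ := by ring
    let vlin : (Z.carrier →L[ℂ] ℂ) →ₗ[ℂ] (G.carrier →L[ℂ] ℂ) :=
      { toFun := fun ψ => linC (fun x => ψ (h₁ x))
        map_add' := by
          intro ψ₁ ψ₂
          refine hext _ _ fun x hx => ?_
          rw [hlinC _ (memHL_clm_comp' (ψ₁ + ψ₂) hh₁) x hx]
          simp only [ContinuousLinearMap.add_apply]
          rw [hlinC _ (memHL_clm_comp' ψ₁ hh₁) x hx,
            hlinC _ (memHL_clm_comp' ψ₂ hh₁) x hx]
        map_smul' := by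
          intro a ψ
          refine hext _ _ fun x hx => ?_
          rw [hlinC _ (memHL_clm_comp' (a • ψ) hh₁) x hx]
          simp only [RingHom.id_apply, ContinuousLinearMap.coe_smul',
            Pi.smul_apply]
          rw [hlinC _ (memHL_clm_comp' ψ hh₁) x hx] }
    let v : (Z.carrier →L[ℂ] ℂ) →L[ℂ] (G.carrier →L[ℂ] ℂ) :=
      vlin.mkContinuous (LipNorm h₁) hvb
    refine ⟨v, LinearMap.mkContinuous_norm_le vlin (lipNorm_nonneg' h₁) hvb, ?_⟩
    ext φ : 1
    show u φ = v (T₁' φ)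
    refine hext _ _ fun x hx => ?_
    have h1 : u φ (δX x) = φ (f x) := by
      rw [hu φ, hlinC _ (memHL_clm_comp' φ hf) x hx]
    have h2 : v (T₁' φ) (δX x) = T₁' φ (h₁ x) := by
      show linC (fun x => T₁' φ (h₁ x)) (δX x) = T₁' φ (h₁ x)
      exact hlinC _ (memHL_clm_comp' (T₁' φ) hh₁) x hx
    rw [h1, h2, hT₁eq φ (h₁ x), ← hfh₁ x hx]
  -- LipNorm δX ≤ 1
  have hδle : LipNorm δX ≤ 1 := by
    refine lipNorm_le' zero_le_one fun x hx y hy => ?_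
    rw [one_mul]
    refine NormedSpace.norm_le_dual_bound ℂ _ (norm_nonneg _) fun φ => ?_
    have hφδ : MemHL (fun z => φ (δX z)) := memHL_clm_comp' φ hδ
    have hφeq : linC (fun z => φ (δX z)) = φ :=
      hext _ _ fun z hz => hlinC _ hφδ z hz
    have hnorm : LipNorm (fun z => φ (δX z)) = ‖φ‖ := by
      rw [← hlinCnorm _ hφδ, hφeq]
    calc ‖φ (δX x - δX y)‖ = ‖φ (δX x) - φ (δX y)‖ := by rw [map_sub]
      _ ≤ LipNorm (fun z => φ (δX z)) * ‖x - y‖ := le_lipNorm' hφδ hx hy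
      _ = ‖x - y‖ * ‖φ‖ := by rw [hnorm]; ring
  constructor
  · -- the iff
    constructor
    · intro huA
      exact ⟨G, T, u, fun φ z => (hTapp z φ).symm, huA, δX, hδ, hTδ⟩
    · rintro ⟨Z, T₁, T₁', hT₁eq, hT₁A, h₁, hh₁, hfh₁⟩
      obtain ⟨v, -, huv⟩ := hfact Z T₁ T₁' h₁ hT₁eq hh₁ hfh₁
      rw [huv]
      exact hA_comp (dualSp Y) (dualSp Y) (dualSp Z) (dualSp G) v T₁' _ hT₁A
  · -- the norm equality
    intro huA
    have hmem₀ : (nA (dualSp Y) (dualSp G) u * LipNorm δX) ∈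
        {r : ℝ | ∃ (Z : BanachSp.{u}) (T₂ : Z.carrier →L[ℂ] Y.carrier)
          (T₂' : (Y.carrier →L[ℂ] ℂ) →L[ℂ] (Z.carrier →L[ℂ] ℂ)) (h₂ : X → Z.carrier),
          (∀ (φ : Y.carrier →L[ℂ] ℂ) (z : Z.carrier), T₂' φ z = φ (T₂ z)) ∧
          T₂' ∈ A (dualSp Y) (dualSp Z) ∧ MemHL h₂ ∧
          (∀ x ∈ ball (0 : X) 1, f x = T₂ (h₂ x)) ∧
          r = nA (dualSp Y) (dualSp Z) T₂' * LipNorm h₂} :=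
      ⟨G, T, u, δX, fun φ z => (hTapp z φ).symm, huA, hδ, hTδ, rfl⟩
    have hlb : ∀ r ∈ {r : ℝ | ∃ (Z : BanachSp.{u}) (T₂ : Z.carrier →L[ℂ] Y.carrier)
          (T₂' : (Y.carrier →L[ℂ] ℂ) →L[ℂ] (Z.carrier →L[ℂ] ℂ)) (h₂ : X → Z.carrier),
          (∀ (φ : Y.carrier →L[ℂ] ℂ) (z : Z.carrier), T₂' φ z = φ (T₂ z)) ∧
          T₂' ∈ A (dualSp Y) (dualSp Z) ∧ MemHL h₂ ∧
          (∀ x ∈ ball (0 : X) 1, f x = T₂ (h₂ x)) ∧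
          r = nA (dualSp Y) (dualSp Z) T₂' * LipNorm h₂},
        nA (dualSp Y) (dualSp G) u ≤ r := by
      rintro r ⟨Z, T₂, T₂', h₂, hT₂eq, hT₂A, hh₂, hfh₂, rfl⟩
      obtain ⟨v, hvnorm, huv⟩ := hfact Z T₂ T₂' h₂ hT₂eq hh₂ hfh₂
      calc nA (dualSp Y) (dualSp G) u
          = nA (dualSp Y) (dualSp G)
            (v.comp (T₂'.comp (ContinuousLinearMap.id ℂ (Y.carrier →L[ℂ] ℂ)))) := by
            exact congrArg (nA (dualSp Y) (dualSp G)) huv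
        _ ≤ ‖v‖ * nA (dualSp Y) (dualSp Z) T₂' *
            ‖ContinuousLinearMap.id ℂ (Y.carrier →L[ℂ] ℂ)‖ :=
            hnA_comp (dualSp Y) (dualSp Y) (dualSp Z) (dualSp G) v T₂'
              (ContinuousLinearMap.id ℂ (Y.carrier →L[ℂ] ℂ)) hT₂A
        _ ≤ LipNorm h₂ * nA (dualSp Y) (dualSp Z) T₂' * 1 := by
            have h0 : (0:ℝ) ≤ nA (dualSp Y) (dualSp Z) T₂' := hnA_nonneg _ _ _
            have hid : ‖ContinuousLinearMap.id ℂ (Y.carrier →L[ℂ] ℂ)‖ ≤ 1 :=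
              ContinuousLinearMap.norm_id_le
            have hid0 : (0:ℝ) ≤ ‖ContinuousLinearMap.id ℂ (Y.carrier →L[ℂ] ℂ)‖ :=
              ContinuousLinearMap.opNorm_nonneg _
            exact mul_le_mul (mul_le_mul_of_nonneg_right hvnorm h0) hid hid0
              (mul_nonneg (lipNorm_nonneg' h₂) h0)
        _ = nA (dualSp Y) (dualSp Z) T₂' * LipNorm h₂ := by ring
    apply le_antisymm
    · exact le_csInf ⟨_, hmem₀⟩ hlb
    · have hbdd : BddBelow {r : ℝ | ∃ (Z : BanachSp.{u}) (T₂ : Z.carrier →L[ℂ] Y.carrier)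
          (T₂' : (Y.carrier →L[ℂ] ℂ) →L[ℂ] (Z.carrier →L[ℂ] ℂ)) (h₂ : X → Z.carrier),
          (∀ (φ : Y.carrier →L[ℂ] ℂ) (z : Z.carrier), T₂' φ z = φ (T₂ z)) ∧
          T₂' ∈ A (dualSp Y) (dualSp Z) ∧ MemHL h₂ ∧
          (∀ x ∈ ball (0 : X) 1, f x = T₂ (h₂ x)) ∧
          r = nA (dualSp Y) (dualSp Z) T₂' * LipNorm h₂} :=
        ⟨nA (dualSp Y) (dualSp G) u, hlb⟩
      calc sInf _ ≤ nA (dualSp Y) (dualSp G) u * LipNorm δX := csInf_le hbdd hmem₀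
        _ ≤ nA (dualSp Y) (dualSp G) u * 1 :=
            mul_le_mul_of_nonneg_left hδle (hnA_nonneg _ _ _)
        _ = nA (dualSp Y) (dualSp G) u := mul_one _
end
end
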